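/- A k-outcome POVM A on ℂ^d has full probability range, i.e., ProbRan(A) = Δ_k, if and only if every effect has unit operator norm: ‖A_i‖ = 1 for all i = 1,...,k. -/

import Mathlib

open Matrix BigOperators
open scoped ComplexOrder

noncomputable def opNorm {d : ℕ} (M : Matrix (Fin d) (Fin d) ℂ) : ℝ :=
  ‖Matrix.toEuclideanCLM (𝕜 := ℂ) M‖

namespace POVMAux

variable {d : ℕ}

section
open scoped MatrixOrder

lemma exists_sqrt_aux {M : Matrix (Fin d) (Fin d) ℂ} (hM : M.PosSemidef) :
    ∃ S : Matrix (Fin d) (Fin d) ℂ, S * S = M ∧ Sᴴ = S :=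
  ⟨CFC.sqrt M, CFC.sqrt_mul_sqrt_self M hM.nonneg, (CFC.sqrt_nonneg M).posSemidef.1⟩

lemma psd_conj_aux {ρ : Matrix (Fin d) (Fin d) ℂ} (hρ : ρ.PosSemidef) :
    ∃ B : Matrix (Fin d) (Fin d) ℂ, ρ = Bᴴ * B := by
  obtain ⟨B, hB⟩ := CStarAlgebra.nonneg_iff_eq_star_mul_self.mp hρ.nonneg
  exact ⟨B, hB⟩

end

lemma inner_equiv_symm_aux (x y : Fin d → ℂ) :
    inner ℂ ((WithLp.equiv 2 (Fin d → ℂ)).symm x) ((WithLp.equiv 2 (Fin d → ℂ)).symm y)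
      = star x ⬝ᵥ y := by
  rw [dotProduct_comm]; rfl

lemma clm_apply (M : Matrix (Fin d) (Fin d) ℂ) (x : Fin d → ℂ) :
    Matrix.toEuclideanCLM (𝕜 := ℂ) M ((WithLp.equiv 2 _).symm x) =
      (WithLp.equiv 2 _).symm (M *ᵥ x) := by
  rfl

lemma sum_mulVec {ι : Type*} (s : Finset ι) (f : ι → Matrix (Fin d) (Fin d) ℂ)
    (x : Fin d → ℂ) : (∑ j ∈ s, f j) *ᵥ x = ∑ j ∈ s, f j *ᵥ x := by
  ext a
  simp only [Matrix.mulVec, dotProduct, Finset.sum_apply, Matrix.sum_apply,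
    Finset.sum_mul]
  rw [Finset.sum_comm]

lemma dotProduct_sum' {ι : Type*} (s : Finset ι) (v : Fin d → ℂ)
    (w : ι → Fin d → ℂ) : v ⬝ᵥ (∑ j ∈ s, w j) = ∑ j ∈ s, v ⬝ᵥ w j := by
  simp only [dotProduct, Finset.sum_apply, Finset.mul_sum]
  rw [Finset.sum_comm]

lemma psd_sum {ι : Type*} (s : Finset ι) (f : ι → Matrix (Fin d) (Fin d) ℂ)
    (h : ∀ i ∈ s, (f i).PosSemidef) : (∑ i ∈ s, f i).PosSemidef := by
  refine Matrix.PosSemidef.of_dotProduct_mulVec_nonneg ?_ fun x => ?_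
  · unfold Matrix.IsHermitian
    rw [Matrix.conjTranspose_sum]
    exact Finset.sum_congr rfl fun i hi => (h i hi).1
  · rw [sum_mulVec, dotProduct_sum']
    exact Finset.sum_nonneg fun i hi => (h i hi).dotProduct_mulVec_nonneg x

lemma psd_smul {M : Matrix (Fin d) (Fin d) ℂ} (hM : M.PosSemidef) {c : ℂ}
    (hc : 0 ≤ c) : (c • M).PosSemidef := by
  have hcs : star c = c := by
    rw [Complex.star_def, Complex.conj_eq_iff_im]
    exact (Complex.nonneg_iff.mp hc).2.symm
  refine Matrix.PosSemidef.of_dotProduct_mulVec_nonneg ?_ fun x => ?_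
  · unfold Matrix.IsHermitian
    rw [Matrix.conjTranspose_smul, hcs, hM.1]
  · rw [Matrix.smul_mulVec, dotProduct_smul, smul_eq_mul]
    exact mul_nonneg hc (hM.dotProduct_mulVec_nonneg x)

lemma trace_conj_mul (B M : Matrix (Fin d) (Fin d) ℂ) :
    (Bᴴ * B * M).trace = ∑ j, star (star (B j)) ⬝ᵥ (M *ᵥ star (B j)) := by
  rw [← Matrix.trace_mul_cycle]
  unfold Matrix.trace
  congr 1
  ext j
  simp only [Matrix.diag_apply, Matrix.mul_apply, Matrix.conjTranspose_apply,
    dotProduct, Matrix.mulVec, Pi.star_apply, star_star, Finset.sum_mul,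
    Finset.mul_sum]
  rw [Finset.sum_comm]
  refine Finset.sum_congr rfl fun l _ => Finset.sum_congr rfl fun m _ => by ring

lemma trace_outer_mul (v : Fin d → ℂ) (M : Matrix (Fin d) (Fin d) ℂ) :
    ((Matrix.vecMulVec v (star v)) * M).trace = star v ⬝ᵥ (M *ᵥ v) := by
  unfold Matrix.trace
  simp only [Matrix.diag_apply, Matrix.mul_apply, Matrix.vecMulVec_apply,
    dotProduct, Matrix.mulVec, Pi.star_apply, Finset.mul_sum]
  rw [Finset.sum_comm]
  refine Finset.sum_congr rfl fun b _ => Finset.sum_congr rfl fun a _ => by ring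

lemma trace_outer (v : Fin d → ℂ) :
    (Matrix.vecMulVec v (star v)).trace = star v ⬝ᵥ v := by
  unfold Matrix.trace
  simp only [Matrix.diag_apply, Matrix.vecMulVec_apply, dotProduct, Pi.star_apply]
  exact Finset.sum_congr rfl fun a _ => by ring

lemma outer_psd (v : Fin d → ℂ) : (Matrix.vecMulVec v (star v)).PosSemidef := by
  refine Matrix.PosSemidef.of_dotProduct_mulVec_nonneg ?_ fun x => ?_
  · ext a b
    simp [Matrix.vecMulVec_apply, Matrix.conjTranspose_apply, mul_comm]
  · have h : star x ⬝ᵥ (Matrix.vecMulVec v (star v) *ᵥ x)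
        = star (star v ⬝ᵥ x) * (star v ⬝ᵥ x) := by
      simp only [dotProduct, Matrix.mulVec, Matrix.vecMulVec_apply,
        Pi.star_apply, star_sum, star_mul', star_star, Finset.sum_mul,
        Finset.mul_sum]
      rw [Finset.sum_comm]
      refine Finset.sum_congr rfl fun a _ => Finset.sum_congr rfl fun b _ => by ring
    rw [h]
    exact star_mul_self_nonneg _


lemma sq_psd {M : Matrix (Fin d) (Fin d) ℂ} (hM : M.PosSemidef)
    (h1 : (1 - M).PosSemidef) : (M - M * M).PosSemidef := by
  obtain ⟨S, hS, hSH⟩ : ∃ S : Matrix (Fin d) (Fin d) ℂ, S * S = M ∧ Sᴴ = S :=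
    exists_sqrt_aux hM
  have h := h1.mul_mul_conjTranspose_same S
  rw [hSH] at h
  have hh : S * (1 - M) * S = M - M * M := by
    rw [← hS]; noncomm_ring
  rwa [hh] at h

lemma quad_eq_sq {M : Matrix (Fin d) (Fin d) ℂ} (hM : M.IsHermitian)
    (x : Fin d → ℂ) :
    star (M *ᵥ x) ⬝ᵥ (M *ᵥ x) = star x ⬝ᵥ ((M * M) *ᵥ x) := by
  rw [star_mulVec, hM.eq, ← Matrix.dotProduct_mulVec, Matrix.mulVec_mulVec]

lemma apply_norm_le {M : Matrix (Fin d) (Fin d) ℂ} (hM : M.PosSemidef)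
    (h1 : (1 - M).PosSemidef) (X : EuclideanSpace ℂ (Fin d)) :
    ‖Matrix.toEuclideanCLM (𝕜 := ℂ) M X‖ ≤ ‖X‖ := by
  set T := Matrix.toEuclideanCLM (𝕜 := ℂ) M with hT
  set x := WithLp.equiv 2 (Fin d → ℂ) X with hx
  have hX : (WithLp.equiv 2 (Fin d → ℂ)).symm x = X := Equiv.symm_apply_apply _ _
  have hTX : T X = (WithLp.equiv 2 (Fin d → ℂ)).symm (M *ᵥ x) := by
    rw [← hX, hT, clm_apply]
  have h₁ : ‖T X‖ ^ 2 = Complex.re (star x ⬝ᵥ ((M * M) *ᵥ x)) := by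
    have h := inner_self_eq_norm_sq (𝕜 := ℂ) (T X)
    rw [hTX, inner_equiv_symm_aux, quad_eq_sq hM.1] at h
    simpa [hTX] using h.symm
  have h₃ : Complex.re (star x ⬝ᵥ ((M * M) *ᵥ x))
      ≤ Complex.re (star x ⬝ᵥ (M *ᵥ x)) := by
    have h := (sq_psd hM h1).dotProduct_mulVec_nonneg x
    rw [Matrix.sub_mulVec, dotProduct_sub] at h
    have := (Complex.le_def.mp h).1
    simp only [Complex.zero_re, Complex.sub_re] at this
    linarith
  have h₄ : Complex.re (star x ⬝ᵥ (M *ᵥ x)) ≤ ‖X‖ * ‖T X‖ := by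
    have he : (inner ℂ X (T X) : ℂ) = star x ⬝ᵥ (M *ᵥ x) := by
      rw [hTX, ← hX, inner_equiv_symm_aux]
    calc Complex.re (star x ⬝ᵥ (M *ᵥ x)) = Complex.re (inner ℂ X (T X) : ℂ) := by rw [he]
      _ ≤ ‖(inner ℂ X (T X) : ℂ)‖ := Complex.re_le_norm _
      _ ≤ ‖X‖ * ‖T X‖ := norm_inner_le_norm _ _
  rcases eq_or_lt_of_le (norm_nonneg (T X)) with h0 | h0
  · rw [← h0]; exact norm_nonneg _
  · have : ‖T X‖ * ‖T X‖ ≤ ‖X‖ * ‖T X‖ := by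
      nlinarith [h₁, h₃, h₄]
    exact le_of_mul_le_mul_right this h0

lemma opNorm_le_one {M : Matrix (Fin d) (Fin d) ℂ} (hM : M.PosSemidef)
    (h1 : (1 - M).PosSemidef) : opNorm M ≤ 1 :=
  ContinuousLinearMap.opNorm_le_bound _ zero_le_one fun X => by
    simpa using apply_norm_le hM h1 X

lemma opNorm_eq_one_of_fixed {M : Matrix (Fin d) (Fin d) ℂ} (hM : M.PosSemidef)
    (h1 : (1 - M).PosSemidef) {v : Fin d → ℂ} (hv : v ≠ 0)
    (hfix : M *ᵥ v = v) : opNorm M = 1 := by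
  refine le_antisymm (opNorm_le_one hM h1) ?_
  set V : EuclideanSpace ℂ (Fin d) := (WithLp.equiv 2 (Fin d → ℂ)).symm v with hV
  have hTV : Matrix.toEuclideanCLM (𝕜 := ℂ) M V = V := by
    rw [hV, clm_apply, hfix]
  have hVne : V ≠ 0 := by
    intro h
    apply hv
    have := congrArg (WithLp.equiv 2 (Fin d → ℂ)) h
    simpa [hV] using this
  have hVpos : 0 < ‖V‖ := norm_pos_iff.mpr hVne
  have hle := (Matrix.toEuclideanCLM (𝕜 := ℂ) M).le_opNorm V
  rw [hTV] at hle
  have h1' : 1 * ‖V‖ ≤ opNorm M * ‖V‖ := by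
    rw [one_mul]; exact hle
  exact le_of_mul_le_mul_right h1' hVpos

lemma exists_fixed {M : Matrix (Fin d) (Fin d) ℂ} (hd : 0 < d)
    (hM : M.PosSemidef) (h1 : (1 - M).PosSemidef) (hn : opNorm M = 1) :
    ∃ v : Fin d → ℂ, v ≠ 0 ∧ M *ᵥ v = v := by
  set T := Matrix.toEuclideanCLM (𝕜 := ℂ) M with hT
  have hTn : ‖T‖ = 1 := hn
  have hsc : IsCompact (Metric.sphere (0 : EuclideanSpace ℂ (Fin d)) 1) :=
    isCompact_sphere _ _
  have hne : (Metric.sphere (0 : EuclideanSpace ℂ (Fin d)) 1).Nonempty := by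
    refine ⟨EuclideanSpace.single (⟨0, hd⟩ : Fin d) (1 : ℂ), ?_⟩
    rw [mem_sphere_zero_iff_norm, EuclideanSpace.norm_single, norm_one]
  obtain ⟨X, hXs, hmax⟩ := hsc.exists_isMaxOn hne
    ((continuous_norm.comp T.continuous).continuousOn)
  have hXn : ‖X‖ = 1 := mem_sphere_zero_iff_norm.mp hXs
  have hle : ‖T X‖ ≤ 1 := by
    have h := T.le_opNorm X
    rwa [hTn, hXn, one_mul] at h
  have hge : (1 : ℝ) ≤ ‖T X‖ := by
    rw [← hTn]
    refine ContinuousLinearMap.opNorm_le_bound _ (norm_nonneg _) fun y => ?_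
    show ‖T y‖ ≤ ‖T X‖ * ‖y‖
    rcases eq_or_ne y 0 with rfl | hy
    · simp
    · have hyn : 0 < ‖y‖ := norm_pos_iff.mpr hy
      have habs : ‖((‖y‖⁻¹ : ℝ) : ℂ)‖ = ‖y‖⁻¹ := by
        simp [Complex.norm_real, abs_of_nonneg (inv_nonneg.mpr hyn.le)]
      have hz : (((‖y‖⁻¹ : ℝ) : ℂ) • y) ∈ Metric.sphere (0 : EuclideanSpace ℂ (Fin d)) 1 := by
        rw [mem_sphere_zero_iff_norm, norm_smul, habs, inv_mul_cancel₀ hyn.ne']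
      have hb : ‖T (((‖y‖⁻¹ : ℝ) : ℂ) • y)‖ ≤ ‖T X‖ := hmax hz
      rw [_root_.map_smul, norm_smul, habs] at hb
      calc ‖T y‖ = ‖y‖ * (‖y‖⁻¹ * ‖T y‖) := by field_simp
        _ ≤ ‖y‖ * ‖T X‖ := mul_le_mul_of_nonneg_left hb hyn.le
        _ = ‖T X‖ * ‖y‖ := mul_comm _ _
  have hTX1 : ‖T X‖ = 1 := le_antisymm hle hge
  set x := WithLp.equiv 2 (Fin d → ℂ) X with hx
  have hXe : (WithLp.equiv 2 (Fin d → ℂ)).symm x = X := Equiv.symm_apply_apply _ _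
  have hTXe : T X = (WithLp.equiv 2 (Fin d → ℂ)).symm (M *ᵥ x) := by
    rw [← hXe, hT, clm_apply]
  have h₁ : (1 : ℝ) = Complex.re (star x ⬝ᵥ ((M * M) *ᵥ x)) := by
    have h := inner_self_eq_norm_sq (𝕜 := ℂ) (T X)
    rw [hTX1, one_pow, hTXe, inner_equiv_symm_aux, quad_eq_sq hM.1] at h
    simpa using h.symm
  have h₃ : Complex.re (star x ⬝ᵥ ((M * M) *ᵥ x))
      ≤ Complex.re (star x ⬝ᵥ (M *ᵥ x)) := by
    have h := (sq_psd hM h1).dotProduct_mulVec_nonneg x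
    rw [Matrix.sub_mulVec, dotProduct_sub] at h
    have := (Complex.le_def.mp h).1
    simp only [Complex.zero_re, Complex.sub_re] at this
    linarith
  have h₄ : Complex.re (star x ⬝ᵥ (M *ᵥ x)) ≤ 1 := by
    have he : (inner ℂ X (T X) : ℂ) = star x ⬝ᵥ (M *ᵥ x) := by
      rw [hTXe, ← hXe, inner_equiv_symm_aux]
    calc Complex.re (star x ⬝ᵥ (M *ᵥ x)) = Complex.re (inner ℂ X (T X) : ℂ) := by rw [he]
      _ ≤ ‖(inner ℂ X (T X) : ℂ)‖ := Complex.re_le_norm _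
      _ ≤ ‖X‖ * ‖T X‖ := norm_inner_le_norm _ _
      _ = 1 := by rw [hXn, hTX1, one_mul]
  have hre : Complex.re (star x ⬝ᵥ (M *ᵥ x)) = 1 := le_antisymm h₄ (by linarith)
  -- the (1 - M) quadratic form at x vanishes
  have hq : star x ⬝ᵥ ((1 - M) *ᵥ x) = 0 := by
    have hnn := h1.dotProduct_mulVec_nonneg x
    have hxx : Complex.re (star x ⬝ᵥ x) = 1 := by
      have h := inner_self_eq_norm_sq (𝕜 := ℂ) X
      rw [hXn, one_pow, ← hXe, inner_equiv_symm_aux] at h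
      simpa using h
    have him := (Complex.nonneg_iff.mp hnn).2
    have hre0 : Complex.re (star x ⬝ᵥ ((1 - M) *ᵥ x)) = 0 := by
      rw [Matrix.sub_mulVec, dotProduct_sub, Complex.sub_re,
        Matrix.one_mulVec, hxx, hre, sub_self]
    exact Complex.ext hre0 him.symm
  have hker : (1 - M) *ᵥ x = 0 := (h1.dotProduct_mulVec_zero_iff x).mp hq
  refine ⟨x, ?_, ?_⟩
  · intro h
    rw [← hXe, h] at hXn
    simp at hXn
  · have := hker
    rw [Matrix.sub_mulVec, Matrix.one_mulVec, sub_eq_zero] at this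
    exact this.symm


lemma exists_ker_of_trace_zero {ρ N : Matrix (Fin d) (Fin d) ℂ}
    (hρ : ρ.PosSemidef) (hN : N.PosSemidef) (hτ : ρ.trace ≠ 0)
    (h0 : (ρ * N).trace = 0) : ∃ v : Fin d → ℂ, v ≠ 0 ∧ N *ᵥ v = 0 := by
  obtain ⟨B, rfl⟩ := psd_conj_aux hρ
  rw [trace_conj_mul] at h0
  have hz := (Finset.sum_eq_zero_iff_of_nonneg
    (fun j _ => hN.dotProduct_mulVec_nonneg (star (B j)))).mp h0
  have hBne : ∃ j, star (B j) ≠ 0 := by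
    by_contra hc
    push_neg at hc
    apply hτ
    have hB0 : B = 0 := by
      ext j l
      have := congrFun (hc j) l
      simpa using this
    rw [hB0]
    simp
  obtain ⟨j, hj⟩ := hBne
  exact ⟨star (B j), hj, (hN.dotProduct_mulVec_zero_iff _).mp (hz j (Finset.mem_univ j))⟩

end POVMAux

open POVMAux

/-- A POVM has full probability range `Δ_k` iff all its effects have unit operator norm. -/
theorem full_probRange_iff_norm_one {d k : ℕ} (hd : 0 < d)
    (A : Fin k → Matrix (Fin d) (Fin d) ℂ)
    (hA : ∀ i, (A i).PosSemidef) (hAsum : ∑ i, A i = 1) :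
    {p : Fin k → ℝ | ∃ ρ : Matrix (Fin d) (Fin d) ℂ, ρ.PosSemidef ∧ ρ.trace = 1 ∧
        ∀ i, (ρ * A i).trace = (p i : ℂ)} = stdSimplex ℝ (Fin k)
      ↔ ∀ i, opNorm (A i) = 1 := by
  classical
  have h1A : ∀ i, (1 - A i).PosSemidef := by
    intro i
    have he := Finset.add_sum_erase Finset.univ A (Finset.mem_univ i)
    rw [hAsum] at he
    have hsub : 1 - A i = ∑ j ∈ Finset.univ.erase i, A j := by
      rw [← he]; abel
    rw [hsub]
    exact psd_sum _ _ fun j _ => hA j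
  constructor
  · intro hset i
    have hmem : (fun j => if j = i then (1 : ℝ) else 0) ∈ stdSimplex ℝ (Fin k) := by
      constructor
      · intro j
        dsimp only
        split <;> norm_num
      · simp
    rw [← hset] at hmem
    obtain ⟨ρ, hρ, hτ, hp⟩ := hmem
    have hpi : (ρ * A i).trace = 1 := by
      have h := hp i
      simpa using h
    have h0 : (ρ * (1 - A i)).trace = 0 := by
      rw [Matrix.mul_sub, mul_one, Matrix.trace_sub, hτ, hpi]
      simp
    obtain ⟨v, hv, hker⟩ := exists_ker_of_trace_zero hρ (h1A i)
      (by rw [hτ]; norm_num) h0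
    rw [Matrix.sub_mulVec, Matrix.one_mulVec, sub_eq_zero] at hker
    exact opNorm_eq_one_of_fixed (hA i) (h1A i) hv hker.symm
  · intro hnorm
    apply Set.Subset.antisymm
    · rintro p ⟨ρ, hρ, hτ, hp⟩
      obtain ⟨B, rfl⟩ := psd_conj_aux hρ
      refine ⟨fun i => ?_, ?_⟩
      · have h := hp i
        rw [trace_conj_mul] at h
        have hnn : (0 : ℂ) ≤ (p i : ℂ) := by
          rw [← h]
          exact Finset.sum_nonneg fun j _ => (hA i).dotProduct_mulVec_nonneg _
        exact_mod_cast Complex.zero_le_real.mp hnn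
      · have hsum : ∑ i, ((p i : ℝ) : ℂ) = 1 := by
          calc ∑ i, ((p i : ℝ) : ℂ) = ∑ i, ((Bᴴ * B) * A i).trace :=
                Finset.sum_congr rfl fun i _ => (hp i).symm
            _ = ((Bᴴ * B) * ∑ i, A i).trace := by
                rw [Finset.mul_sum, Matrix.trace_sum]
            _ = 1 := by rw [hAsum, mul_one, hτ]
        have h2 : ((∑ i, p i : ℝ) : ℂ) = ((1 : ℝ) : ℂ) := by push_cast; exact hsum
        exact_mod_cast h2
    · rintro p ⟨hp0, hp1⟩
      have hfix : ∀ i, ∃ v : Fin d → ℂ, v ≠ 0 ∧ A i *ᵥ v = v :=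
        fun i => exists_fixed hd (hA i) (h1A i) (hnorm i)
      choose v hv hfv using hfix
      set c : Fin k → ℂ := fun i => star (v i) ⬝ᵥ v i with hcdef
      obtain ⟨r, hr, hcr⟩ : ∃ r : Fin k → ℝ, (∀ i, 0 < r i) ∧ ∀ i, c i = (r i : ℂ) := by
        refine ⟨fun i => (c i).re, fun i => ?_, fun i => ?_⟩
        · have hnn : 0 ≤ c i := dotProduct_star_self_nonneg (v i)
          have hne : c i ≠ 0 := by
            rw [hcdef]
            simpa [dotProduct_star_self_eq_zero] using hv i
          rcases lt_or_eq_of_le ((Complex.nonneg_iff.mp hnn).1) with h | h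
          · exact h
          · exact absurd (Complex.ext h.symm (Complex.nonneg_iff.mp hnn).2.symm) hne
        · have hnn : 0 ≤ c i := dotProduct_star_self_nonneg (v i)
          exact Complex.ext rfl (Complex.nonneg_iff.mp hnn).2.symm
      have hrne : ∀ i, ((r i : ℝ) : ℂ) ≠ 0 := fun i => by
        exact_mod_cast (hr i).ne'
      have hqd : ∀ i, star (v i) ⬝ᵥ (A i *ᵥ v i) = c i := by
        intro i
        rw [hfv i]
      have hq0 : ∀ i j, j ≠ i → star (v i) ⬝ᵥ (A j *ᵥ v i) = 0 := by
        intro i j hji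
        have hsum : ∑ l, star (v i) ⬝ᵥ (A l *ᵥ v i) = c i := by
          rw [← dotProduct_sum', ← sum_mulVec, hAsum, Matrix.one_mulVec]
        have he := Finset.add_sum_erase Finset.univ
          (fun l => star (v i) ⬝ᵥ (A l *ᵥ v i)) (Finset.mem_univ i)
        rw [hsum] at he
        simp only [hqd i] at he
        have hz : ∑ l ∈ Finset.univ.erase i, star (v i) ⬝ᵥ (A l *ᵥ v i) = 0 := by
          have h3 := congrArg (fun z => z - c i) he
          simpa [add_comm] using h3
        exact (Finset.sum_eq_zero_iff_of_nonneg
          (fun l _ => (hA l).dotProduct_mulVec_nonneg (v i))).mp hz j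
          (Finset.mem_erase.mpr ⟨hji, Finset.mem_univ j⟩)
      set ρ : Matrix (Fin d) (Fin d) ℂ :=
        ∑ i, ((p i / r i : ℝ) : ℂ) • Matrix.vecMulVec (v i) (star (v i)) with hρdef
      have hcoef : ∀ i, (0 : ℂ) ≤ ((p i / r i : ℝ) : ℂ) := fun i =>
        Complex.zero_le_real.mpr (div_nonneg (hp0 i) (hr i).le)
      refine ⟨ρ, ?_, ?_, ?_⟩
      · exact psd_sum _ _ fun i _ => psd_smul (outer_psd (v i)) (hcoef i)
      · rw [hρdef, Matrix.trace_sum]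
        have hts : ∀ i, (((p i / r i : ℝ) : ℂ) • Matrix.vecMulVec (v i) (star (v i))).trace
            = ((p i : ℝ) : ℂ) := by
          intro i
          rw [Matrix.trace_smul, trace_outer]
          show ((p i / r i : ℝ) : ℂ) • (star (v i) ⬝ᵥ v i) = _
          rw [show star (v i) ⬝ᵥ v i = c i from rfl, hcr i, smul_eq_mul]
          push_cast
          rw [div_mul_cancel₀ _ (hrne i)]
        rw [Finset.sum_congr rfl fun i _ => hts i]
        rw [← Complex.ofReal_sum]
        rw [hp1]
        norm_num
      · intro j
        rw [hρdef, Finset.sum_mul, Matrix.trace_sum]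
        have hterm : ∀ i, ((((p i / r i : ℝ) : ℂ) • Matrix.vecMulVec (v i) (star (v i))) * A j).trace
            = if i = j then ((p j : ℝ) : ℂ) else 0 := by
          intro i
          rw [Matrix.smul_mul, Matrix.trace_smul, trace_outer_mul, smul_eq_mul]
          rcases eq_or_ne i j with rfl | hij
          · rw [hqd i, hcr i, if_pos rfl]
            push_cast
            rw [div_mul_cancel₀ _ (hrne i)]
          · rw [hq0 i j (Ne.symm hij), mul_zero, if_neg hij]
        rw [Finset.sum_congr rfl fun i _ => hterm i]
        simp
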